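/- Let N and M be positive integers. The two branches of the symmetric MAC DMT formula agree at the branch point: d^PPC_{1,M}(r₀) = d^PPC_{N,M}(N r₀) where r₀ = min(1, M/(N+1)). Consequently the function d^MAC-sym_{N,1,M}, defined piecewise by the two branches, is continuous and nonincreasing on [0, min(1, M/N)]. -/
import Mathlib


/-- The Zheng–Tse point-to-point DMT curve for `m` transmit and `n` receive antennas:
piecewise-linear interpolation of the points `(k, (m-k)(n-k))`, extended by `0`
for `r ≥ min m n`. -/
noncomputable def dPPC (m n : ℕ) (r : ℝ) : ℝ :=
  if min (m : ℝ) (n : ℝ) ≤ r then 0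
  else ((m : ℝ) - (⌊r⌋ : ℝ)) * ((n : ℝ) - (⌊r⌋ : ℝ))
    - (r - (⌊r⌋ : ℝ)) * ((m : ℝ) + (n : ℝ) - 2 * (⌊r⌋ : ℝ) - 1)

/-- The symmetric-MAC DMT curve for `N` users, each with `m` antennas, and an
`n`-antenna receiver. -/
noncomputable def dMACsym (N m n : ℕ) (r : ℝ) : ℝ :=
  if r ≤ min (m : ℝ) ((n : ℝ) / ((N : ℝ) + 1)) then dPPC m n r
  else dPPC (N * m) n ((N : ℝ) * r)

lemma dPPC_one (M : ℕ) (hM : 1 ≤ M) (r : ℝ) (h0 : 0 ≤ r) (h1 : r ≤ 1) :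
    dPPC 1 M r = (M : ℝ) * (1 - r) := by
  have hM1 : (1 : ℝ) ≤ (M : ℝ) := by exact_mod_cast hM
  have hmin : min ((1 : ℕ) : ℝ) ((M : ℕ) : ℝ) = 1 := by
    simp [min_eq_left, hM1]
  rcases eq_or_lt_of_le h1 with h | h
  · rw [dPPC, if_pos (by rw [hmin, ← h])]
    rw [← h]; ring
  · have hfloor : ⌊r⌋ = 0 := Int.floor_eq_zero_iff.2 ⟨h0, h⟩
    rw [dPPC, if_neg (by rw [hmin]; linarith), hfloor]
    push_cast
    ring

lemma dPPC_lin (N M : ℕ) (hM : 1 ≤ M) (hMN : M ≤ N) (s : ℝ)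
    (h1 : (M : ℝ) - 1 ≤ s) (h2 : s ≤ (M : ℝ)) :
    dPPC N M s = ((N : ℝ) - M + 1) * ((M : ℝ) - s) := by
  have hMN' : (M : ℝ) ≤ (N : ℝ) := by exact_mod_cast hMN
  have hmin : min ((N : ℕ) : ℝ) ((M : ℕ) : ℝ) = (M : ℝ) := min_eq_right hMN'
  rcases eq_or_lt_of_le h2 with h | h
  · rw [dPPC, if_pos (by rw [hmin, h]), h]; ring
  · have hfloor : ⌊s⌋ = (M : ℤ) - 1 := by
      rw [Int.floor_eq_iff]
      push_cast
      constructor <;> linarith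
    rw [dPPC, if_neg (by rw [hmin]; linarith), hfloor]
    push_cast
    ring

/-- the two branches of the symmetric-MAC DMT formula agree at the
branch point `r₀ = min(1, M/(N+1))`, i.e. `d^PPC_{1,M}(r₀) = d^PPC_{N,M}(N r₀)`;
consequently `d^MAC-sym_{N,1,M}` is continuous and nonincreasing on
`[0, min(1, M/N)]`. -/
theorem stmt14 (N M : ℕ) (hN : 1 ≤ N) (hM : 1 ≤ M) :
    dPPC 1 M (min 1 ((M : ℝ) / ((N : ℝ) + 1)))
      = dPPC N M ((N : ℝ) * min 1 ((M : ℝ) / ((N : ℝ) + 1))) ∧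
    ContinuousOn (dMACsym N 1 M) (Set.Icc 0 (min 1 ((M : ℝ) / (N : ℝ)))) ∧
    AntitoneOn (dMACsym N 1 M) (Set.Icc 0 (min 1 ((M : ℝ) / (N : ℝ)))) := by
  have hN1 : (1 : ℝ) ≤ (N : ℝ) := by exact_mod_cast hN
  have hM1 : (1 : ℝ) ≤ (M : ℝ) := by exact_mod_cast hM
  have hN0 : (0 : ℝ) < (N : ℝ) := by linarith
  have hN10 : (0 : ℝ) < (N : ℝ) + 1 := by linarith
  rcases le_or_gt M N with hcase | hcase
  · -- M ≤ N
    have hMN' : (M : ℝ) ≤ (N : ℝ) := by exact_mod_cast hcase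
    have hr0lt : (M : ℝ) / ((N : ℝ) + 1) < 1 := by
      rw [div_lt_one hN10]; linarith
    have hr0pos : 0 < (M : ℝ) / ((N : ℝ) + 1) := by positivity
    have hminr0 : min (1 : ℝ) ((M : ℝ) / ((N : ℝ) + 1)) = (M : ℝ) / ((N : ℝ) + 1) :=
      min_eq_right (le_of_lt hr0lt)
    have hMNle1 : (M : ℝ) / (N : ℝ) ≤ 1 := by
      rw [div_le_one hN0]; linarith
    have hminMN : min (1 : ℝ) ((M : ℝ) / (N : ℝ)) = (M : ℝ) / (N : ℝ) :=
      min_eq_right hMNle1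
    set r0 : ℝ := (M : ℝ) / ((N : ℝ) + 1) with hr0
    -- branch point equality
    have hNr0 : (N : ℝ) * r0 = (N : ℝ) * (M : ℝ) / ((N : ℝ) + 1) := by
      rw [hr0]; ring
    have hs1 : (M : ℝ) - 1 ≤ (N : ℝ) * r0 := by
      rw [hNr0, le_div_iff₀ hN10]; nlinarith
    have hs2 : (N : ℝ) * r0 ≤ (M : ℝ) := by
      rw [hNr0, div_le_iff₀ hN10]; nlinarith
    have heq1 : dPPC 1 M (min 1 ((M : ℝ) / ((N : ℝ) + 1)))
        = dPPC N M ((N : ℝ) * min 1 ((M : ℝ) / ((N : ℝ) + 1))) := by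
      rw [hminr0]
      rw [dPPC_one M hM r0 (le_of_lt hr0pos) (le_of_lt hr0lt),
        dPPC_lin N M hM hcase _ hs1 hs2, hr0]
      field_simp
      ring
    -- the combined function equals a min of two lines on the interval
    set g : ℝ → ℝ := fun r => min ((M : ℝ) * (1 - r)) (((N : ℝ) - M + 1) * ((M : ℝ) - N * r))
      with hg
    have key : ∀ r, 0 ≤ r → ((N : ℝ) - (M : ℝ)) * ((M : ℝ) - ((N : ℝ) + 1) * r)
        = (((N : ℝ) - M + 1) * ((M : ℝ) - N * r)) - ((M : ℝ) * (1 - r)) := by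
      intro r _; ring
    have heqg : ∀ r ∈ Set.Icc (0 : ℝ) ((M : ℝ) / (N : ℝ)), dMACsym N 1 M r = g r := by
      intro r hr
      obtain ⟨hr0', hr1'⟩ := hr
      have hrM : (N : ℝ) * r ≤ (M : ℝ) := by
        rw [← le_div_iff₀' hN0]; exact hr1'
      rcases le_or_gt r r0 with hle | hlt
      · have hcond : r ≤ min ((1 : ℕ) : ℝ) ((M : ℝ) / ((N : ℝ) + 1)) := by
          push_cast; rw [hminr0]; exact hle
        rw [dMACsym, if_pos hcond, dPPC_one M hM r hr0' (by linarith)]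
        have hdiff : 0 ≤ (((N : ℝ) - M + 1) * ((M : ℝ) - N * r)) - ((M : ℝ) * (1 - r)) := by
          rw [← key r hr0']
          have h1 : (0 : ℝ) ≤ (N : ℝ) - M := by linarith
          have h2 : (0 : ℝ) ≤ (M : ℝ) - ((N : ℝ) + 1) * r := by
            have := (le_div_iff₀ hN10).1 (hle.trans_eq hr0)
            linarith [mul_comm r ((N : ℝ) + 1)]
          positivity
        rw [hg]
        exact (min_eq_left (by linarith)).symm
      · have hcond : ¬ r ≤ min ((1 : ℕ) : ℝ) ((M : ℝ) / ((N : ℝ) + 1)) := by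
          push_cast; rw [hminr0]; linarith
        have hs1' : (M : ℝ) - 1 ≤ (N : ℝ) * r := by
          have : (N : ℝ) * r0 ≤ (N : ℝ) * r := by
            apply mul_le_mul_of_nonneg_left (le_of_lt hlt) (le_of_lt hN0)
          linarith
        rw [dMACsym, if_neg hcond]
        have : N * 1 = N := mul_one N
        rw [this, dPPC_lin N M hM hcase _ hs1' hrM]
        have hdiff : (((N : ℝ) - M + 1) * ((M : ℝ) - N * r)) - ((M : ℝ) * (1 - r)) ≤ 0 := by
          rw [← key r hr0']
          have h1 : (0 : ℝ) ≤ (N : ℝ) - M := by linarith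
          have h2 : (M : ℝ) - ((N : ℝ) + 1) * r ≤ 0 := by
            have : r0 * ((N : ℝ) + 1) ≤ r * ((N : ℝ) + 1) := by nlinarith
            have := (div_mul_cancel₀ (M : ℝ) (ne_of_gt hN10) : r0 * ((N : ℝ) + 1) = (M : ℝ)) ▸ this
            nlinarith
          exact mul_nonpos_of_nonneg_of_nonpos h1 h2
        rw [hg]
        exact (min_eq_right (by linarith)).symm
    have hgcont : Continuous g := by
      have c1 : Continuous fun r : ℝ => (M : ℝ) * (1 - r) :=
        continuous_const.mul (continuous_const.sub continuous_id)
      have c2 : Continuous fun r : ℝ => ((N : ℝ) - M + 1) * ((M : ℝ) - N * r) :=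
        continuous_const.mul (continuous_const.sub (continuous_const.mul continuous_id))
      exact c1.min c2
    refine ⟨heq1, ?_, ?_⟩
    · rw [hminMN]
      exact (hgcont.continuousOn).congr heqg
    · rw [hminMN]
      intro a ha b hb hab
      rw [heqg a ha, heqg b hb, hg]
      have hab' : (N : ℝ) * a ≤ (N : ℝ) * b :=
        mul_le_mul_of_nonneg_left hab (le_of_lt hN0)
      apply min_le_min
      · nlinarith
      · nlinarith [mul_le_mul_of_nonneg_left hab' (by linarith : (0:ℝ) ≤ (N : ℝ) - M + 1)]
  · -- N < M, so N + 1 ≤ M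
    have hNM : (N : ℝ) + 1 ≤ (M : ℝ) := by exact_mod_cast hcase
    have hr0 : (1 : ℝ) ≤ (M : ℝ) / ((N : ℝ) + 1) := by
      rw [le_div_iff₀ hN10]; linarith
    have hminr0 : min (1 : ℝ) ((M : ℝ) / ((N : ℝ) + 1)) = 1 := min_eq_left hr0
    have hMN1 : (1 : ℝ) ≤ (M : ℝ) / (N : ℝ) := by
      rw [le_div_iff₀ hN0]; linarith
    have hminMN : min (1 : ℝ) ((M : ℝ) / (N : ℝ)) = 1 := min_eq_left hMN1
    have heq1 : dPPC 1 M (min 1 ((M : ℝ) / ((N : ℝ) + 1)))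
        = dPPC N M ((N : ℝ) * min 1 ((M : ℝ) / ((N : ℝ) + 1))) := by
      rw [hminr0, mul_one, dPPC_one M hM 1 zero_le_one le_rfl]
      rw [dPPC, if_pos (by rw [min_eq_left (by exact_mod_cast le_of_lt hcase : (N : ℝ) ≤ (M : ℝ))])]
      ring
    have heqg : ∀ r ∈ Set.Icc (0 : ℝ) 1, dMACsym N 1 M r = (M : ℝ) * (1 - r) := by
      intro r hr
      obtain ⟨hra, hrb⟩ := hr
      have hcond : r ≤ min ((1 : ℕ) : ℝ) ((M : ℝ) / ((N : ℝ) + 1)) := by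
        push_cast; rw [hminr0]; exact hrb
      rw [dMACsym, if_pos hcond, dPPC_one M hM r hra hrb]
    refine ⟨heq1, ?_, ?_⟩
    · rw [hminMN]
      have c1 : Continuous fun r : ℝ => (M : ℝ) * (1 - r) :=
        continuous_const.mul (continuous_const.sub continuous_id)
      exact c1.continuousOn.congr heqg
    · rw [hminMN]
      intro a ha b hb hab
      rw [heqg a ha, heqg b hb]
      have := mul_le_mul_of_nonneg_left hab (by linarith : (0:ℝ) ≤ (M : ℝ))
      linarith
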